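/- Define β(t) = (q(1−q)μ²/ς²)·(1 − e^{−2α₄ t}) / (α₄ + α₁ + (α₄ − α₁)e^{−2α₄ t}) for t ≥ 0. Then the denominator α₄ + α₁ + (α₄ − α₁)e^{−2α₄ t} is strictly positive for every t ≥ 0, β(0) = 0, and β satisfies the Riccati equation β'(t) = −α₂·β(t)² − 2α₁·β(t) + q(1−q)μ²/ς² for all t ≥ 0. -/

import Mathlib

private lemma stmt4_key (α₁ α₂ α₄ c E : ℝ) (h : α₄ ^ 2 = α₁ ^ 2 + α₂ * c)
    (hD : α₄ + α₁ + (α₄ - α₁) * E ≠ 0) :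
    -α₂ * (c * (1 - E) / (α₄ + α₁ + (α₄ - α₁) * E)) ^ 2
      - 2 * α₁ * (c * (1 - E) / (α₄ + α₁ + (α₄ - α₁) * E)) + c
    = (c * (0 - E * (-2 * α₄)) * (α₄ + α₁ + (α₄ - α₁) * E)
        - c * (1 - E) * (0 + (α₄ - α₁) * (E * (-2 * α₄))))
      / (α₄ + α₁ + (α₄ - α₁) * E) ^ 2 := by
  rw [eq_div_iff (pow_ne_zero 2 hD)]
  have hxD := div_mul_cancel₀ (c * (1 - E)) hD
  linear_combination (-α₂ * (c * (1 - E) / (α₄ + α₁ + (α₄ - α₁) * E) * (α₄ + α₁ + (α₄ - α₁) * E)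
      + c * (1 - E)) - 2 * α₁ * (α₄ + α₁ + (α₄ - α₁) * E)) * hxD + c * (1 - E) ^ 2 * h

set_option maxHeartbeats 1000000 in
/-- Kim–Omberg model: the explicit function
`β(t) = (q(1-q)μ²/ς²)(1-e^{-2α₄t})/(α₄+α₁+(α₄-α₁)e^{-2α₄t})` has strictly positive
denominator for all `t ≥ 0`, satisfies `β(0) = 0`, and solves the Riccati equation
`β' = -α₂β² - 2α₁β + q(1-q)μ²/ς²` on `[0,∞)`. -/
theorem stmt4 (k m μ ς σ ρ q : ℝ)
    (hk : 0 < k) (hμ : μ ≠ 0) (hς : 0 < ς) (hσ : 0 < σ)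
    (hρ : ρ ∈ Set.Ioo (-1 : ℝ) 1) (hq : q ∈ Set.Ioo (0 : ℝ) 1)
    (σ₁ σ₂ α₁ α₂ α₃ α₄ : ℝ)
    (hσ₁ : σ₁ = ρ * σ) (hσ₂ : σ₂ = Real.sqrt (1 - ρ ^ 2) * σ)
    (hα₁ : α₁ = k + q * μ * σ₁ / ς) (hα₂ : α₂ = σ₁ ^ 2 + σ₂ ^ 2 / (1 - q))
    (hα₃ : α₃ = k * m)
    (hα₄ : α₄ = Real.sqrt (α₁ ^ 2 + q * (1 - q) * α₂ * μ ^ 2 / ς ^ 2))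
    (β : ℝ → ℝ)
    (hβ : ∀ t, β t = (q * (1 - q) * μ ^ 2 / ς ^ 2) * (1 - Real.exp (-2 * α₄ * t)) /
        (α₄ + α₁ + (α₄ - α₁) * Real.exp (-2 * α₄ * t))) :
    (∀ t ≥ (0 : ℝ), 0 < α₄ + α₁ + (α₄ - α₁) * Real.exp (-2 * α₄ * t)) ∧
    β 0 = 0 ∧
    (∀ t ≥ (0 : ℝ), HasDerivAt β
      (-α₂ * (β t) ^ 2 - 2 * α₁ * β t + q * (1 - q) * μ ^ 2 / ς ^ 2) t) := by
  obtain ⟨hρ1, hρ2⟩ := hρ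
  obtain ⟨hq0, hq1⟩ := hq
  have hq1' : 0 < 1 - q := by linarith
  have hρsq : 0 < 1 - ρ ^ 2 := by nlinarith
  have hσ₂pos : 0 < σ₂ ^ 2 := by
    rw [hσ₂, mul_pow, Real.sq_sqrt hρsq.le]; positivity
  have hα₂pos : 0 < α₂ := by
    rw [hα₂]
    have h := div_pos hσ₂pos hq1'
    nlinarith [sq_nonneg σ₁]
  have hcpos : 0 < q * (1 - q) * μ ^ 2 / ς ^ 2 := by positivity
  have harg : α₁ ^ 2 + q * (1 - q) * α₂ * μ ^ 2 / ς ^ 2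
      = α₁ ^ 2 + α₂ * (q * (1 - q) * μ ^ 2 / ς ^ 2) := by ring
  have hα₄sq : α₄ ^ 2 = α₁ ^ 2 + α₂ * (q * (1 - q) * μ ^ 2 / ς ^ 2) := by
    rw [hα₄, harg, Real.sq_sqrt (add_nonneg (sq_nonneg _) (mul_pos hα₂pos hcpos).le)]
  have hα₄nonneg : 0 ≤ α₄ := hα₄ ▸ Real.sqrt_nonneg _
  have hgt : |α₁| < α₄ := by
    nlinarith [sq_abs α₁, abs_nonneg α₁, mul_pos hα₂pos hcpos]
  obtain ⟨hlt1, hlt2⟩ := abs_lt.mp hgt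
  have h1 : 0 < α₄ + α₁ := by linarith
  have h2 : 0 < α₄ - α₁ := by linarith
  have hD : ∀ t : ℝ, 0 < α₄ + α₁ + (α₄ - α₁) * Real.exp (-2 * α₄ * t) := fun t =>
    add_pos h1 (mul_pos h2 (Real.exp_pos _))
  refine ⟨fun t _ => hD t, by rw [hβ]; simp, fun t _ => ?_⟩
  have hfun : β = fun t => (q * (1 - q) * μ ^ 2 / ς ^ 2) * (1 - Real.exp (-2 * α₄ * t)) /
      (α₄ + α₁ + (α₄ - α₁) * Real.exp (-2 * α₄ * t)) := funext hβ
  subst hfun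
  have hlin : HasDerivAt (fun t : ℝ => -2 * α₄ * t) (-2 * α₄) t := by
    simpa using (hasDerivAt_id t).const_mul (-2 * α₄)
  have hE := hlin.exp
  have hN : HasDerivAt (fun t : ℝ => (q * (1 - q) * μ ^ 2 / ς ^ 2) * (1 - Real.exp (-2 * α₄ * t)))
      ((q * (1 - q) * μ ^ 2 / ς ^ 2) * (0 - Real.exp (-2 * α₄ * t) * (-2 * α₄))) t :=
    ((hasDerivAt_const t (1:ℝ)).sub hE).const_mul _
  have hDd : HasDerivAt (fun t : ℝ => α₄ + α₁ + (α₄ - α₁) * Real.exp (-2 * α₄ * t))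
      (0 + (α₄ - α₁) * (Real.exp (-2 * α₄ * t) * (-2 * α₄))) t :=
    (hasDerivAt_const t (α₄ + α₁)).add (hE.const_mul _)
  have hder := hN.div hDd (hD t).ne'
  exact hder.congr_deriv (stmt4_key α₁ α₂ α₄ _ (Real.exp (-2 * α₄ * t)) hα₄sq (hD t).ne').symm
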